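/- Assume (A). Then there exists a constant C ∈ (0,1), depending only on 𝔊, such that for all r ∈ (0,1): C · Σ_{(a,s)∈𝔊°} J_{a,s}(r) ≤ I(r) ≤ Σ_{(a,s)∈𝔊°} J_{a,s}(r). -/

import Mathlib

open MeasureTheory
open scoped ENNReal Classical

/-- `I(r) = ∫_{(0,1]^N} x^b / (Σ_{(a,s)∈𝔊} x^a r^s) dx`, with values in `[0,∞]`. -/
noncomputable def Ifun (N : ℕ) (G : Finset ((Fin N → ℕ) × ℝ)) (b : Fin N → ℕ)
    (r : ℝ) : ℝ≥0∞ :=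
  ∫⁻ x in Set.univ.pi (fun _ : Fin N => Set.Ioc (0 : ℝ) 1),
    ENNReal.ofReal ((∏ i, x i ^ b i) / ∑ p ∈ G, (∏ i, x i ^ p.1 i) * r ^ p.2)

/-- The polyhedron `P_{a,s} = {y ∈ [0,∞)^N : ⟨a − a′, y⟩ ≤ s′ − s for all (a′,s′) ∈ 𝔊}`. -/
def Pset (N : ℕ) (G : Finset ((Fin N → ℕ) × ℝ)) (a : Fin N → ℕ) (s : ℝ) :
    Set (Fin N → ℝ) :=
  {y | (∀ i, 0 ≤ y i) ∧ ∀ p ∈ G, ∑ i, ((a i : ℝ) - (p.1 i : ℝ)) * y i ≤ p.2 - s}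

/-- The linear function `φ_a(y) = ⟨a − b − 𝟏, y⟩`. -/
def phiFun (N : ℕ) (a b : Fin N → ℕ) (y : Fin N → ℝ) : ℝ :=
  ∑ i, ((a i : ℝ) - (b i : ℝ) - 1) * y i

/-- `J_{a,s}(r) = (ln(1/r))^N · r^{−s} · ∫_{P_{a,s}} e^{(ln(1/r)) φ_a(y)} dy`. -/
noncomputable def Jfun (N : ℕ) (G : Finset ((Fin N → ℕ) × ℝ)) (b : Fin N → ℕ)
    (a : Fin N → ℕ) (s : ℝ) (r : ℝ) : ℝ≥0∞ :=
  ENNReal.ofReal ((Real.log (1/r)) ^ N / r ^ s) *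
    ∫⁻ y in Pset N G a s, ENNReal.ofReal (Real.exp (Real.log (1/r) * phiFun N a b y))

/-- `𝔊° = {(a,s) ∈ 𝔊 : P_{a,s} has positive N-dimensional Lebesgue measure}`. -/
noncomputable def Gcirc (N : ℕ) (G : Finset ((Fin N → ℕ) × ℝ)) :
    Finset ((Fin N → ℕ) × ℝ) :=
  G.filter (fun p => 0 < volume (Pset N G p.1 p.2))

/-! ### Auxiliary lemmas -/

lemma sum_sub_mul {N : ℕ} (c c' : Fin N → ℝ) (y : Fin N → ℝ) :
    ∑ i, (c i - c' i) * y i = (∑ i, c i * y i) - ∑ i, c' i * y i := by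
  rw [← Finset.sum_sub_distrib]
  congr 1; ext i; ring

lemma det_diag {N : ℕ} (c : Fin N → ℝ) :
    ContinuousLinearMap.det (ContinuousLinearMap.pi fun i =>
      c i • ContinuousLinearMap.proj (R := ℝ) (φ := fun _ : Fin N => ℝ) i) = ∏ i, c i := by
  have h : ((ContinuousLinearMap.pi fun i =>
      c i • ContinuousLinearMap.proj (R := ℝ) (φ := fun _ : Fin N => ℝ) i) :
      (Fin N → ℝ) →ₗ[ℝ] (Fin N → ℝ)) = Matrix.toLin' (Matrix.diagonal c) := by
    apply LinearMap.ext; intro x; ext i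
    simp [Matrix.toLin'_apply, Matrix.mulVec_diagonal, mul_comm]
  rw [ContinuousLinearMap.det, h, LinearMap.det_toLin', Matrix.det_diagonal]

lemma null_hyperplane {N : ℕ} (c : Fin N → ℝ) (hc : c ≠ 0) (d : ℝ) :
    volume {y : Fin N → ℝ | ∑ i, c i * y i = d} = 0 := by
  set L : (Fin N → ℝ) →ₗ[ℝ] ℝ := ∑ i, c i • LinearMap.proj i with hLdef
  have hL : ∀ y, L y = ∑ i, c i * y i := by
    intro y; simp [hLdef, LinearMap.sum_apply]
  obtain ⟨i, hi⟩ : ∃ i, c i ≠ 0 := by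
    by_contra h; push_neg at h; exact hc (funext h)
  have hv : L (Pi.single i 1) = c i := by
    rw [hL, Finset.sum_eq_single i]
    · simp
    · intro j _ hj; simp [Pi.single_eq_of_ne hj]
    · simp
  have hvne : L (Pi.single i 1) ≠ 0 := by rw [hv]; exact hi
  obtain ⟨y₀, hy₀d⟩ : ∃ y₀, L y₀ = d :=
    ⟨(d / L (Pi.single i 1)) • (Pi.single i 1 : Fin N → ℝ), by
      rw [LinearMap.map_smul, smul_eq_mul, div_mul_cancel₀ _ hvne]⟩
  have key : ∀ y : Fin N → ℝ, (y + -y₀ ∈ LinearMap.ker L) ↔ ∑ j, c j * y j = d := by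
    intro y
    rw [LinearMap.mem_ker, map_add, map_neg, hy₀d, ← hL y]
    constructor <;> intro h <;> linarith
  have hset : {y : Fin N → ℝ | ∑ j, c j * y j = d} =
      (fun y => y + (-y₀)) ⁻¹' (LinearMap.ker L : Set (Fin N → ℝ)) := by
    ext y; simp only [Set.mem_setOf_eq, Set.mem_preimage, SetLike.mem_coe, key y]
  rw [hset, measure_preimage_add_right]
  apply Measure.addHaar_submodule
  intro htop
  exact hvne (LinearMap.mem_ker.mp (htop.symm ▸ Submodule.mem_top))

/-- The density appearing after the change of variables. -/
noncomputable def gdens (N : ℕ) (G : Finset ((Fin N → ℕ) × ℝ)) (b : Fin N → ℕ)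
    (r : ℝ) (y : Fin N → ℝ) : ℝ≥0∞ :=
  ENNReal.ofReal ((Real.log (1/r)) ^ N * ∏ i, Real.exp (-(Real.log (1/r) * y i))) *
    ENNReal.ofReal ((∏ i, Real.exp (-(Real.log (1/r) * y i)) ^ b i) /
      ∑ p ∈ G, (∏ i, Real.exp (-(Real.log (1/r) * y i)) ^ p.1 i) * r ^ p.2)

lemma cov {N : ℕ} (G : Finset ((Fin N → ℕ) × ℝ)) (b : Fin N → ℕ) {r : ℝ}
    (hr0 : 0 < r) (hr1 : r < 1) :
    Ifun N G b r = ∫⁻ y in Set.univ.pi (fun _ : Fin N => Set.Ici (0:ℝ)),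
      gdens N G b r y := by
  set t := Real.log (1/r) with htdef
  have ht : 0 < t := by
    rw [htdef, one_div, Real.log_inv, neg_pos]
    exact Real.log_neg hr0 hr1
  set S : Set (Fin N → ℝ) := Set.univ.pi (fun _ : Fin N => Set.Ici (0:ℝ)) with hSdef
  have hS : MeasurableSet S := MeasurableSet.univ_pi (fun _ => measurableSet_Ici)
  set f : (Fin N → ℝ) → (Fin N → ℝ) := fun y i => Real.exp (-(t * y i)) with hfdef
  set f' : (Fin N → ℝ) → ((Fin N → ℝ) →L[ℝ] (Fin N → ℝ)) := fun y =>
    ContinuousLinearMap.pi (fun i => (-t * Real.exp (-(t * y i))) •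
      ContinuousLinearMap.proj (R := ℝ) (φ := fun _ : Fin N => ℝ) i) with hf'def
  have hderiv : ∀ y, HasFDerivAt f (f' y) y := by
    intro y
    apply hasFDerivAt_pi''
    intro i
    rw [hf'def, ContinuousLinearMap.proj_pi]
    have h1 : HasFDerivAt (fun y : Fin N → ℝ => -(t * y i))
        ((-t) • ContinuousLinearMap.proj (R := ℝ) (φ := fun _ : Fin N => ℝ) i) y := by
      have hh := ((-t) • ContinuousLinearMap.proj (R := ℝ)
        (φ := fun _ : Fin N => ℝ) i).hasFDerivAt (x := y)
      convert hh using 1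
      funext z; simp [neg_mul]
    have h2 := (Real.hasDerivAt_exp (-(t * y i))).comp_hasFDerivAt y h1
    convert h2 using 1
    · rfl
    · rfl
    rw [smul_smul]
    ring_nf
  have hf' : ∀ y ∈ S, HasFDerivWithinAt f (f' y) S y :=
    fun y _ => (hderiv y).hasFDerivWithinAt
  have hinj : Set.InjOn f S := by
    intro y _ z _ h
    funext i
    have := congrFun h i
    simp only [hfdef] at this
    have := Real.exp_injective this
    have := neg_injective this
    exact mul_left_cancel₀ ht.ne' this
  have himg : f '' S = Set.univ.pi (fun _ : Fin N => Set.Ioc (0:ℝ) 1) := by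
    ext x
    constructor
    · rintro ⟨y, hy, rfl⟩
      intro i _
      refine ⟨Real.exp_pos _, Real.exp_le_one_iff.mpr ?_⟩
      have : 0 ≤ y i := hy i (Set.mem_univ i)
      nlinarith
    · intro hx
      refine ⟨fun i => -Real.log (x i) / t, fun i _ => ?_, ?_⟩
      · have h1 := (hx i (Set.mem_univ i)).1
        have h2 := (hx i (Set.mem_univ i)).2
        have : Real.log (x i) ≤ 0 := Real.log_nonpos h1.le h2
        exact div_nonneg (by linarith) ht.le
      · funext i
        have h1 := (hx i (Set.mem_univ i)).1
        simp only [hfdef]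
        rw [mul_div_assoc', mul_comm, mul_div_assoc, div_self ht.ne', mul_one, neg_neg,
          Real.exp_log h1]
  have key := lintegral_image_eq_lintegral_abs_det_fderiv_mul volume hS hf' hinj
    (fun x => ENNReal.ofReal ((∏ i, x i ^ b i) / ∑ p ∈ G, (∏ i, x i ^ p.1 i) * r ^ p.2))
  rw [himg] at key
  rw [show Ifun N G b r = ∫⁻ x in Set.univ.pi (fun _ : Fin N => Set.Ioc (0 : ℝ) 1),
    ENNReal.ofReal ((∏ i, x i ^ b i) / ∑ p ∈ G, (∏ i, x i ^ p.1 i) * r ^ p.2) from rfl, key]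
  apply setLIntegral_congr_fun hS
  intro y _
  have hdet : |ContinuousLinearMap.det (f' y)| = t ^ N * ∏ i, Real.exp (-(t * y i)) := by
    rw [hf'def]
    rw [det_diag]
    rw [Finset.abs_prod]
    have : ∀ i : Fin N, |(-t * Real.exp (-(t * y i)))| = t * Real.exp (-(t * y i)) := by
      intro i
      rw [abs_mul, abs_neg, abs_of_pos ht, abs_of_pos (Real.exp_pos _)]
    simp only [this]
    rw [Finset.prod_mul_distrib, Finset.prod_const, Finset.card_univ, Fintype.card_fin]
  beta_reduce
  rw [hdet]
  rfl

lemma measurableSet_Pset {N : ℕ} (G : Finset ((Fin N → ℕ) × ℝ)) (a : Fin N → ℕ) (s : ℝ) :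
    MeasurableSet (Pset N G a s) := by
  have : Pset N G a s = (⋂ i, {y : Fin N → ℝ | 0 ≤ y i}) ∩
      ⋂ p ∈ G, {y : Fin N → ℝ | ∑ i, ((a i : ℝ) - (p.1 i : ℝ)) * y i ≤ p.2 - s} := by
    ext y; simp [Pset]
  rw [this]
  refine (MeasurableSet.iInter fun i =>
    measurableSet_le measurable_const (measurable_pi_apply i)).inter ?_
  refine MeasurableSet.biInter (G.countable_toSet) fun p _ => ?_
  exact measurableSet_le (Finset.measurable_sum _ fun i _ =>
    (measurable_pi_apply i).const_mul _) measurable_const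

lemma Pset_subset {N : ℕ} (G : Finset ((Fin N → ℕ) × ℝ)) (a : Fin N → ℕ) (s : ℝ) :
    Pset N G a s ⊆ Set.univ.pi (fun _ : Fin N => Set.Ici (0:ℝ)) :=
  fun y hy i _ => hy.1 i

lemma Pset_cover {N : ℕ} (G : Finset ((Fin N → ℕ) × ℝ)) (hGne : G.Nonempty) :
    Set.univ.pi (fun _ : Fin N => Set.Ici (0:ℝ)) ⊆ ⋃ p ∈ G, Pset N G p.1 p.2 := by
  intro y hy
  obtain ⟨p, hpG, hmin⟩ := G.exists_min_image
    (fun q => (∑ i, (q.1 i : ℝ) * y i) + q.2) hGne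
  refine Set.mem_biUnion hpG ⟨fun i => hy i (Set.mem_univ i), fun q hq => ?_⟩
  have := hmin q hq
  rw [sum_sub_mul]
  linarith

lemma Pset_null_inter {N : ℕ} (G : Finset ((Fin N → ℕ) × ℝ)) {p q : (Fin N → ℕ) × ℝ}
    (hp : p ∈ G) (hq : q ∈ G) (hpq : p ≠ q) :
    volume (Pset N G p.1 p.2 ∩ Pset N G q.1 q.2) = 0 := by
  by_cases ha : p.1 = q.1
  · have hs : p.2 ≠ q.2 := by
      intro h; exact hpq (Prod.ext ha h)
    have : Pset N G p.1 p.2 ∩ Pset N G q.1 q.2 = ∅ := by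
      ext y
      simp only [Set.mem_inter_iff, Set.mem_empty_iff_false, iff_false]
      rintro ⟨hy1, hy2⟩
      have h1 := hy1.2 q hq
      have h2 := hy2.2 p hp
      rw [sum_sub_mul] at h1 h2
      rw [ha] at h1 h2
      exact hs (by linarith)
    rw [this, measure_empty]
  · have hcne : (fun i => (p.1 i : ℝ) - (q.1 i : ℝ)) ≠ 0 := by
      intro h
      apply ha
      funext i
      have := congrFun h i
      simp only [Pi.zero_apply, sub_eq_zero] at this
      exact_mod_cast this
    refine measure_mono_null (fun y hy => ?_)
      (null_hyperplane (fun i => (p.1 i : ℝ) - (q.1 i : ℝ)) hcne (q.2 - p.2))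
    have h1 := hy.1.2 q hq
    have h2 := hy.2.2 p hp
    rw [sum_sub_mul] at h1 h2
    show ∑ i, ((p.1 i : ℝ) - (q.1 i : ℝ)) * y i = q.2 - p.2
    rw [sum_sub_mul]
    linarith

lemma prod_exp_pow {N : ℕ} (t : ℝ) (y : Fin N → ℝ) (k : Fin N → ℕ) :
    ∏ i, Real.exp (-(t * y i)) ^ k i = Real.exp (-(t * ∑ i, (k i : ℝ) * y i)) := by
  have : ∀ i : Fin N, Real.exp (-(t * y i)) ^ k i = Real.exp ((k i : ℝ) * (-(t * y i))) := by
    intro i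
    rw [← Real.exp_nat_mul]
  simp only [this]
  rw [← Real.exp_sum]
  congr 1
  rw [Finset.mul_sum, ← Finset.sum_neg_distrib]
  exact Finset.sum_congr rfl fun i _ => by ring

lemma rpow_eq_exp {r : ℝ} (hr0 : 0 < r) (s : ℝ) :
    r ^ s = Real.exp (-(Real.log (1/r) * s)) := by
  rw [Real.rpow_def_of_pos hr0, one_div, Real.log_inv]
  ring_nf

lemma pointwise_core (G : Finset ((Fin N → ℕ) × ℝ)) (b : Fin N → ℕ)
    {r : ℝ} (hr0 : 0 < r) (hr1 : r < 1) {p : (Fin N → ℕ) × ℝ} (hp : p ∈ G)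
    {y : Fin N → ℝ} (hy : y ∈ Pset N G p.1 p.2) :
    ((Real.log (1/r)) ^ N * ∏ i, Real.exp (-(Real.log (1/r) * y i))) *
      ((∏ i, Real.exp (-(Real.log (1/r) * y i)) ^ b i) /
        ∑ q ∈ G, (∏ i, Real.exp (-(Real.log (1/r) * y i)) ^ q.1 i) * r ^ q.2)
      ≤ (Real.log (1/r)) ^ N / r ^ p.2 * Real.exp (Real.log (1/r) * phiFun N p.1 b y) ∧
    (Real.log (1/r)) ^ N / r ^ p.2 * Real.exp (Real.log (1/r) * phiFun N p.1 b y)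
      ≤ (G.card : ℝ) * (((Real.log (1/r)) ^ N * ∏ i, Real.exp (-(Real.log (1/r) * y i))) *
      ((∏ i, Real.exp (-(Real.log (1/r) * y i)) ^ b i) /
        ∑ q ∈ G, (∏ i, Real.exp (-(Real.log (1/r) * y i)) ^ q.1 i) * r ^ q.2)) := by
  set t := Real.log (1/r) with htdef
  have ht : 0 < t := by
    rw [htdef, one_div, Real.log_inv, neg_pos]; exact Real.log_neg hr0 hr1
  set σ := ∑ i, y i with hσdef
  set β := ∑ i, (b i : ℝ) * y i with hβdef
  set u : ((Fin N → ℕ) × ℝ) → ℝ := fun q => ∑ i, (q.1 i : ℝ) * y i with hudef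
  have hprod1 : ∏ i, Real.exp (-(t * y i)) = Real.exp (-(t * σ)) := by
    rw [← Real.exp_sum]
    congr 1
    rw [hσdef, Finset.mul_sum, ← Finset.sum_neg_distrib]
  have hprodb : ∏ i, Real.exp (-(t * y i)) ^ b i = Real.exp (-(t * β)) := prod_exp_pow t y b
  have hD : ∑ q ∈ G, (∏ i, Real.exp (-(t * y i)) ^ q.1 i) * r ^ q.2
      = ∑ q ∈ G, Real.exp (-(t * (u q + q.2))) := by
    refine Finset.sum_congr rfl fun q _ => ?_
    rw [prod_exp_pow t y q.1, rpow_eq_exp hr0, ← htdef, ← Real.exp_add]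
    congr 1; ring
  have hphi : phiFun N p.1 b y = u p - β - σ := by
    rw [phiFun]
    have : ∀ i, ((p.1 i : ℝ) - (b i : ℝ) - 1) * y i
        = (p.1 i : ℝ) * y i - (b i : ℝ) * y i - y i := fun i => by ring
    simp only [this]
    rw [Finset.sum_sub_distrib, Finset.sum_sub_distrib, hudef, hβdef, hσdef]
  have hH : t ^ N / r ^ p.2 * Real.exp (t * phiFun N p.1 b y)
      = (t ^ N * Real.exp (-(t * σ)) * Real.exp (-(t * β))) / Real.exp (-(t * (u p + p.2))) := by
    rw [rpow_eq_exp hr0, ← htdef, hphi, div_eq_mul_inv, ← Real.exp_neg, neg_neg,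
      div_eq_mul_inv, ← Real.exp_neg, mul_assoc, ← Real.exp_add,
      mul_assoc, ← Real.exp_add, mul_assoc, ← Real.exp_add]
    congr 2; ring
  set m := Real.exp (-(t * (u p + p.2))) with hmdef
  have hm : 0 < m := Real.exp_pos _
  set D := ∑ q ∈ G, Real.exp (-(t * (u q + q.2))) with hDdef
  have hDlow : m ≤ D :=
    Finset.single_le_sum (f := fun q => Real.exp (-(t * (u q + q.2))))
      (fun q _ => (Real.exp_pos _).le) hp
  have hDpos : 0 < D := lt_of_lt_of_le hm hDlow
  have hDup : D ≤ (G.card : ℝ) * m := by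
    have hterm : ∀ q ∈ G, Real.exp (-(t * (u q + q.2))) ≤ m := by
      intro q hq
      have h1 := hy.2 q hq
      rw [sum_sub_mul] at h1
      have h2 : u p + p.2 ≤ u q + q.2 := by rw [hudef]; simp only; linarith
      rw [hmdef]
      apply Real.exp_le_exp.mpr
      nlinarith
    calc D ≤ G.card • m := Finset.sum_le_card_nsmul G _ m hterm
    _ = (G.card : ℝ) * m := nsmul_eq_mul _ _
  set K := t ^ N * Real.exp (-(t * σ)) * Real.exp (-(t * β)) with hKdef
  have hK : 0 < K := by positivity
  have hLHS : (t ^ N * ∏ i, Real.exp (-(t * y i))) *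
      ((∏ i, Real.exp (-(t * y i)) ^ b i) /
        ∑ q ∈ G, (∏ i, Real.exp (-(t * y i)) ^ q.1 i) * r ^ q.2) = K / D := by
    rw [hprod1, hprodb, hD, hKdef]; ring
  constructor
  · rw [hLHS, hH]
    exact div_le_div_of_nonneg_left hK.le hm hDlow
  · rw [hLHS, hH]
    have hcd : (G.card : ℝ) * (K / D) = ((G.card : ℝ) * K) / D := by ring
    rw [hcd, div_le_div_iff₀ hm hDpos]
    nlinarith

lemma gdens_eq {N : ℕ} (G : Finset ((Fin N → ℕ) × ℝ)) (b : Fin N → ℕ)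
    (r : ℝ) (y : Fin N → ℝ) : gdens N G b r y =
  ENNReal.ofReal ((Real.log (1/r)) ^ N * ∏ i, Real.exp (-(Real.log (1/r) * y i))) *
    ENNReal.ofReal ((∏ i, Real.exp (-(Real.log (1/r) * y i)) ^ b i) /
      ∑ p ∈ G, (∏ i, Real.exp (-(Real.log (1/r) * y i)) ^ p.1 i) * r ^ p.2) := rfl

theorem stmt5 (N : ℕ) (hN : 1 ≤ N) (G : Finset ((Fin N → ℕ) × ℝ)) (hGne : G.Nonempty)
    (hGs : ∀ p ∈ G, 0 ≤ p.2) (b : Fin N → ℕ)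
    (hA : ∀ r : ℝ, 0 < r → r < 1 → Ifun N G b r < ⊤) :
    ∃ C : ℝ, 0 < C ∧ C < 1 ∧ ∀ r : ℝ, 0 < r → r < 1 →
      ENNReal.ofReal C * (∑ p ∈ Gcirc N G, Jfun N G b p.1 p.2 r) ≤ Ifun N G b r ∧
      Ifun N G b r ≤ ∑ p ∈ Gcirc N G, Jfun N G b p.1 p.2 r := by
  classical
  have hcard1 : 1 ≤ (G.card : ℝ) := by exact_mod_cast Finset.card_pos.mpr hGne
  refine ⟨1 / ((G.card : ℝ) + 1), by positivity, ?_, ?_⟩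
  · rw [div_lt_one (by positivity)]
    linarith
  intro r hr0 hr1
  have ht : 0 < Real.log (1/r) := by
    rw [one_div, Real.log_inv, neg_pos]; exact Real.log_neg hr0 hr1
  set S : Set (Fin N → ℝ) := Set.univ.pi (fun _ : Fin N => Set.Ici (0:ℝ)) with hSdef
  have hS : MeasurableSet S := MeasurableSet.univ_pi (fun _ => measurableSet_Ici)
  set ν : Measure (Fin N → ℝ) := volume.withDensity (gdens N G b r) with hνdef
  have hI : Ifun N G b r = ν S := by
    rw [cov G b hr0 hr1, hνdef, withDensity_apply _ hS]
  have hν_ac : ∀ {A : Set (Fin N → ℝ)}, volume A = 0 → ν A = 0 := fun h =>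
    withDensity_absolutelyContinuous volume (gdens N G b r) h
  have hGc_sub : Gcirc N G ⊆ G := Finset.filter_subset _ G
  -- the measure of S splits as the sum over Gcirc
  have hUeq : ν (⋃ p ∈ Gcirc N G, Pset N G p.1 p.2)
      = ∑ p ∈ Gcirc N G, ν (Pset N G p.1 p.2) := by
    refine measure_biUnion_finset₀ ?_ (fun q _ => (measurableSet_Pset G q.1 q.2).nullMeasurableSet)
    intro p hp q hq hpq
    exact hν_ac (Pset_null_inter G (hGc_sub (Finset.mem_coe.mp hp))
      (hGc_sub (Finset.mem_coe.mp hq)) hpq)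
  have hB : ν (⋃ p ∈ (G \ Gcirc N G), Pset N G p.1 p.2) = 0 := by
    refine (measure_biUnion_null_iff ((G \ Gcirc N G).countable_toSet)).mpr fun p hp => ?_
    obtain ⟨hpG, hnot⟩ := Finset.mem_sdiff.mp hp
    have : ¬ (0 < volume (Pset N G p.1 p.2)) := by
      intro hpos
      exact hnot (Finset.mem_filter.mpr ⟨hpG, hpos⟩)
    exact hν_ac (le_zero_iff.mp (not_lt.mp this))
  have h1 : ν S ≤ ν (⋃ p ∈ Gcirc N G, Pset N G p.1 p.2) := by
    have hcup : (⋃ p ∈ G, Pset N G p.1 p.2) ⊆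
        (⋃ p ∈ Gcirc N G, Pset N G p.1 p.2) ∪ (⋃ p ∈ (G \ Gcirc N G), Pset N G p.1 p.2) := by
      intro y hy
      simp only [Set.mem_iUnion, exists_prop] at hy
      obtain ⟨p, hpG, hyp⟩ := hy
      by_cases h : p ∈ Gcirc N G
      · exact Or.inl (Set.mem_biUnion h hyp)
      · exact Or.inr (Set.mem_biUnion (Finset.mem_sdiff.mpr ⟨hpG, h⟩) hyp)
    calc ν S ≤ ν (⋃ p ∈ G, Pset N G p.1 p.2) := measure_mono (Pset_cover G hGne)
      _ ≤ ν ((⋃ p ∈ Gcirc N G, Pset N G p.1 p.2) ∪ (⋃ p ∈ (G \ Gcirc N G), Pset N G p.1 p.2)) :=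
        measure_mono hcup
      _ ≤ ν (⋃ p ∈ Gcirc N G, Pset N G p.1 p.2) + ν (⋃ p ∈ (G \ Gcirc N G), Pset N G p.1 p.2) :=
        measure_union_le _ _
      _ = ν (⋃ p ∈ Gcirc N G, Pset N G p.1 p.2) := by rw [hB, add_zero]
  have h2 : ν (⋃ p ∈ Gcirc N G, Pset N G p.1 p.2) ≤ ν S :=
    measure_mono (Set.iUnion₂_subset fun p _ => Pset_subset G p.1 p.2)
  have hsplit : ν S = ∑ p ∈ Gcirc N G, ν (Pset N G p.1 p.2) := by
    rw [le_antisymm h1 h2, hUeq]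
  -- comparison of each piece with Jfun
  have hcomp : ∀ p ∈ Gcirc N G, ν (Pset N G p.1 p.2) ≤ Jfun N G b p.1 p.2 r ∧
      Jfun N G b p.1 p.2 r ≤ (G.card : ℝ≥0∞) * ν (Pset N G p.1 p.2) := by
    intro p hpGc
    have hpG : p ∈ G := hGc_sub hpGc
    have hPm := measurableSet_Pset G p.1 p.2
    have hcpos : 0 ≤ (Real.log (1/r)) ^ N / r ^ p.2 :=
      div_nonneg (pow_nonneg ht.le N) (Real.rpow_pos_of_pos hr0 _).le
    have hJeq : Jfun N G b p.1 p.2 r = ∫⁻ y in Pset N G p.1 p.2,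
        ENNReal.ofReal ((Real.log (1/r)) ^ N / r ^ p.2 *
          Real.exp (Real.log (1/r) * phiFun N p.1 b y)) := by
      rw [Jfun, ← lintegral_const_mul' _ _ ENNReal.ofReal_ne_top]
      exact lintegral_congr fun y => (ENNReal.ofReal_mul hcpos).symm
    have hνP : ν (Pset N G p.1 p.2) = ∫⁻ y in Pset N G p.1 p.2, gdens N G b r y :=
      withDensity_apply _ hPm
    have hXnn : ∀ y : Fin N → ℝ,
        0 ≤ (Real.log (1/r)) ^ N * ∏ i, Real.exp (-(Real.log (1/r) * y i)) := by
      intro y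
      exact mul_nonneg (pow_nonneg ht.le N) (Finset.prod_nonneg fun i _ => (Real.exp_pos _).le)
    constructor
    · rw [hνP, hJeq]
      refine setLIntegral_mono' hPm fun y hy => ?_
      rw [gdens_eq, ← ENNReal.ofReal_mul (hXnn y)]
      exact ENNReal.ofReal_le_ofReal (pointwise_core G b hr0 hr1 hpG hy).1
    · rw [hνP, hJeq]
      calc ∫⁻ y in Pset N G p.1 p.2, ENNReal.ofReal ((Real.log (1/r)) ^ N / r ^ p.2 *
            Real.exp (Real.log (1/r) * phiFun N p.1 b y))
          ≤ ∫⁻ y in Pset N G p.1 p.2, (G.card : ℝ≥0∞) * gdens N G b r y := by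
            refine setLIntegral_mono' hPm fun y hy => ?_
            calc ENNReal.ofReal ((Real.log (1/r)) ^ N / r ^ p.2 *
                  Real.exp (Real.log (1/r) * phiFun N p.1 b y))
                ≤ ENNReal.ofReal ((G.card : ℝ) *
                    (((Real.log (1/r)) ^ N * ∏ i, Real.exp (-(Real.log (1/r) * y i))) *
                    ((∏ i, Real.exp (-(Real.log (1/r) * y i)) ^ b i) /
                    ∑ q ∈ G, (∏ i, Real.exp (-(Real.log (1/r) * y i)) ^ q.1 i) * r ^ q.2))) :=
                  ENNReal.ofReal_le_ofReal (pointwise_core G b hr0 hr1 hpG hy).2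
              _ = (G.card : ℝ≥0∞) * gdens N G b r y := by
                  rw [ENNReal.ofReal_mul (Nat.cast_nonneg _), ENNReal.ofReal_natCast,
                    gdens_eq, ENNReal.ofReal_mul (hXnn y)]
        _ = (G.card : ℝ≥0∞) * ∫⁻ y in Pset N G p.1 p.2, gdens N G b r y :=
            lintegral_const_mul' _ _ (ENNReal.natCast_ne_top _)
  have hfac : ENNReal.ofReal (1 / ((G.card : ℝ) + 1)) * (G.card : ℝ≥0∞) ≤ 1 := by
    rw [← ENNReal.ofReal_natCast G.card, ← ENNReal.ofReal_mul (by positivity)]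
    refine ENNReal.ofReal_le_one.mpr ?_
    rw [div_mul_eq_mul_div, one_mul, div_le_one (by positivity)]
    linarith
  constructor
  · rw [hI, hsplit, Finset.mul_sum]
    refine Finset.sum_le_sum fun p hp => ?_
    calc ENNReal.ofReal (1 / ((G.card : ℝ) + 1)) * Jfun N G b p.1 p.2 r
        ≤ ENNReal.ofReal (1 / ((G.card : ℝ) + 1)) *
            ((G.card : ℝ≥0∞) * ν (Pset N G p.1 p.2)) :=
          mul_le_mul_right (hcomp p hp).2 _
      _ = (ENNReal.ofReal (1 / ((G.card : ℝ) + 1)) * (G.card : ℝ≥0∞)) *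
            ν (Pset N G p.1 p.2) := (mul_assoc _ _ _).symm
      _ ≤ 1 * ν (Pset N G p.1 p.2) := mul_le_mul_left hfac _
      _ = ν (Pset N G p.1 p.2) := one_mul _
  · rw [hI, hsplit]
    exact Finset.sum_le_sum fun p hp => (hcomp p hp).1
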